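/- Let D be a mono-C3-free tournament with |V(D)| ≥ 3 whose strongly connected components D_0, D_1, …, D_p (p ≥ 0) satisfy that for all 0 ≤ i < j ≤ p, either every arc between D_i and D_j goes from D_j to D_i, or there is no arc between D_i and D_j. If every vertex v of D has |N⁺(v)| ≥ 1, then D contains a directed Hamilton path. -/

import Mathlib

/-- A mono-`C3`-free tournament: a multipartite tournament (an orientation of a complete
multipartite graph) whose partite sets have at most `2` vertices, such that distinct
vertices of a common partite set have no common out-neighbor. -/
def IsMonoC3FreeTournament {V : Type*} (A : V → V → Prop) : Prop :=
  (∀ v, ¬A v v) ∧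
  (∀ u v, A u v → ¬A v u) ∧
  (∀ u v w, u ≠ v → v ≠ w → u ≠ w → ¬A u v → ¬A v u → A v w ∨ A w v) ∧
  (∀ x y, x ≠ y → ¬A x y → ¬A y x → ∀ z, ¬(A x z ∧ A y z))

namespace MonoC3

variable {V : Type*} {A : V → V → Prop}

lemma hirr (hD : IsMonoC3FreeTournament A) (v : V) : ¬ A v v := hD.1 v

lemma hasym (hD : IsMonoC3FreeTournament A) {u v : V} (h : A u v) : ¬ A v u := hD.2.1 u v h

/-- a vertex has at most one non-neighbor -/
lemma uniqNon (hD : IsMonoC3FreeTournament A) {x y z : V} (hxy : x ≠ y) (hxz : x ≠ z)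
    (h1 : ¬ A x y) (h2 : ¬ A y x) (h3 : ¬ A x z) (h4 : ¬ A z x) : y = z := by
  by_contra hyz
  rcases hD.2.2.1 y x z (Ne.symm hxy) hxz hyz h2 h1 with h | h
  · exact h3 h
  · exact h4 h

lemma hflip (hD : IsMonoC3FreeTournament A) {x y z : V} (hxy : ¬ A x y) (hyx : ¬ A y x)
    (hne : x ≠ y) (h : A y z) : A z x := by
  have hzx : z ≠ x := fun e => hyx (e ▸ h)
  have hzy : z ≠ y := fun e => hD.1 y (e ▸ h)
  by_cases h1 : A x z
  · exact absurd ⟨h1, h⟩ (hD.2.2.2 x y hne hxy hyx z)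
  · by_cases h2 : A z x
    · exact h2
    · exact absurd (uniqNon hD hne (Ne.symm hzx) hxy hyx h1 h2) (Ne.symm hzy)

/-! ### list machinery -/

/-- last vertex of the nonempty list `a :: l` -/
def tip (a : V) (l : List V) : V := (a :: l).getLast (List.cons_ne_nil _ _)

@[simp] lemma tip_nil (a : V) : tip a ([] : List V) = a := rfl

@[simp] lemma tip_cons (a b : V) (l : List V) : tip a (b :: l) = tip b l := by
  simp [tip, List.getLast_cons]

lemma tip_append (a : V) (l m : List V) : tip a (l ++ m) = tip (tip a l) m := by
  induction l generalizing a with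
  | nil => simp
  | cons b t ih => simp [ih]

@[simp] lemma tip_snoc (a : V) (l : List V) (z : V) : tip a (l ++ [z]) = z := by
  simp [tip_append]

lemma tip_mem (a : V) (l : List V) : tip a l ∈ a :: l := by
  induction l generalizing a with
  | nil => simp
  | cons b t ih =>
    simp only [tip_cons]
    exact List.mem_cons_of_mem a (ih b)

section rel
variable {R : V → V → Prop}

lemma chain_cons_iff {a b : V} {l : List V} :
    List.Chain R a (b :: l) ↔ R a b ∧ List.Chain R b l := List.isChain_cons_cons

@[simp] lemma chain_nil_iff {a : V} : List.Chain R a [] := List.IsChain.singleton a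

lemma chain_snoc {a z : V} {l : List V} :
    List.Chain R a (l ++ [z]) ↔ List.Chain R a l ∧ R (tip a l) z := by
  induction l generalizing a with
  | nil => simp [tip, chain_cons_iff, chain_nil_iff]
  | cons b t ih => simp [chain_cons_iff, ih, and_assoc]

lemma chain_middle {x y : V} {p q : List V} :
    List.Chain R x (p ++ y :: q) ↔ List.Chain R x p ∧ R (tip x p) y ∧ List.Chain R y q := by
  induction p generalizing x with
  | nil => simp [chain_cons_iff, chain_nil_iff]
  | cons b t ih => simp [chain_cons_iff, ih, and_assoc]

lemma chain_append' {x : V} {p q : List V} (h1 : List.Chain R x p)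
    (h2 : List.Chain R (tip x p) q) : List.Chain R x (p ++ q) := by
  induction p generalizing x with
  | nil => simpa using h2
  | cons b t ih =>
    rw [chain_cons_iff] at h1
    rw [List.cons_append, chain_cons_iff]
    exact ⟨h1.1, ih h1.2 (by simpa using h2)⟩

/-- a cycle through the vertex list `a :: l` -/
def Cyc (R : V → V → Prop) (a : V) (l : List V) : Prop :=
  List.Chain R a l ∧ R (tip a l) a

lemma rot_step {a b : V} {t : List V} (h : Cyc R a (b :: t)) : Cyc R b (t ++ [a]) := by
  obtain ⟨hc, hcl⟩ := h
  rw [chain_cons_iff] at hc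
  exact ⟨chain_snoc.2 ⟨hc.2, by simpa using hcl⟩, by simpa using hc.1⟩

end rel

end MonoC3
namespace MonoC3

variable {V : Type*} {A : V → V → Prop}

section rel2
variable {R : V → V → Prop}

lemma rot_to_aux : ∀ (p : List V) (a : V) (l : List V) (z : V) (q : List V),
    a :: l = p ++ z :: q → Cyc R a l → ∃ m, Cyc R z m ∧ (z :: m).Perm (a :: l) := by
  intro p
  induction p with
  | nil =>
    intro a l z q h hc
    rw [List.nil_append] at h
    obtain ⟨rfl, rfl⟩ : a = z ∧ l = q := by simpa using h
    exact ⟨l, hc, List.Perm.refl _⟩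
  | cons x p' ih =>
    intro a l z q h hc
    rw [List.cons_append] at h
    obtain ⟨rfl, hl⟩ : a = x ∧ l = p' ++ z :: q := by simpa using h
    cases l with
    | nil => exact absurd hl.symm (List.append_ne_nil_of_right_ne_nil _ (List.cons_ne_nil _ _))
    | cons b t =>
      have hc' : Cyc R b (t ++ [a]) := rot_step hc
      have heq : b :: (t ++ [a]) = p' ++ z :: (q ++ [a]) := by
        have : (b :: t) ++ [a] = (p' ++ z :: q) ++ [a] := by rw [hl]
        simpa using this
      obtain ⟨m, hm, hperm⟩ := ih b (t ++ [a]) z (q ++ [a]) heq hc'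
      refine ⟨m, hm, hperm.trans ?_⟩
      have h2 : b :: (t ++ [a]) = (b :: t) ++ [a] := by simp
      rw [h2]
      exact List.perm_append_singleton _ _

lemma rot_to {a z : V} {l : List V} (hz : z ∈ a :: l) (hc : Cyc R a l) :
    ∃ m, Cyc R z m ∧ (z :: m).Perm (a :: l) := by
  obtain ⟨p, q, h⟩ := List.append_of_mem hz
  exact rot_to_aux p a l z q h hc

lemma extract : ∀ (n : ℕ) (a : V) (l : List V), (a :: l).length ≤ n → Cyc R a l →
    ∃ b m, Cyc R b m ∧ (b :: m).Nodup ∧ ∀ x ∈ b :: m, x ∈ a :: l := by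
  intro n
  induction n with
  | zero => intro a l h _; simp at h
  | succ n ih =>
    intro a l hlen hc
    by_cases hnd : (a :: l).Nodup
    · exact ⟨a, l, hc, hnd, fun x hx => hx⟩
    · classical
      rw [List.nodup_iff_count_le_one] at hnd
      push_neg at hnd
      obtain ⟨z, hz⟩ := hnd
      have hz2 : 2 ≤ (a :: l).count z := hz
      have hzmem : z ∈ a :: l := by
        rw [← List.count_pos_iff]; omega
      obtain ⟨m, hm, hperm⟩ := rot_to hzmem hc
      have hcnt : 2 ≤ (z :: m).count z := by rwa [hperm.count_eq]
      have hzm : z ∈ m := by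
        have := List.count_cons_self (a := z) (l := m)
        rw [← List.count_pos_iff]; omega
      obtain ⟨p, q, hpq⟩ := List.append_of_mem hzm
      have hchain : List.Chain R z (p ++ z :: q) := hpq ▸ hm.1
      rw [chain_middle] at hchain
      have hcyc2 : Cyc R z p := ⟨hchain.1, hchain.2.1⟩
      have hlen2 : (z :: p).length ≤ n := by
        have h1 : (z :: m).length = (a :: l).length := hperm.length_eq
        rw [hpq] at h1
        simp only [List.length_cons, List.length_append] at h1 ⊢
        simp only [List.length_cons] at hlen
        omega
      obtain ⟨b, m', hb, hnd', hsub⟩ := ih z p hlen2 hcyc2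
      refine ⟨b, m', hb, hnd', fun x hx => ?_⟩
      refine hperm.mem_iff.mp ?_
      have hxzp : x ∈ z :: p := hsub x hx
      rw [hpq]
      rcases List.mem_cons.1 hxzp with h | h
      · simp [h]
      · simp only [List.mem_cons, List.mem_append]
        tauto

lemma cross {P : V → Prop} : ∀ (l : List V) (a : V), List.Chain R a l → ¬ P a →
    P (tip a l) → ∃ u d, R u d ∧ ¬ P u ∧ P d := by
  intro l
  induction l with
  | nil => intro a _ ha hta; simp at hta; exact absurd hta ha
  | cons b t ih =>
    intro a hchain ha hta
    rw [chain_cons_iff] at hchain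
    by_cases hb : P b
    · exact ⟨a, b, hchain.1, ha, hb⟩
    · exact ih b hchain.2 hb (by simpa using hta)

end rel2

lemma cyc_len (hD : IsMonoC3FreeTournament A) {a : V} {l : List V} (hc : Cyc A a l)
    (hnd : (a :: l).Nodup) : 2 ≤ l.length := by
  match l with
  | [] => exact absurd hc.2 (hD.1 a)
  | [b] =>
    have h1 : A a b := (List.chain_cons.1 hc.1).1
    have h2 : A b a := by simpa [Cyc, tip] using hc.2
    exact absurd h2 (hasym hD h1)
  | b :: c :: t => simp

section rel3
variable {R : V → V → Prop}

lemma rot_good {P Q : V → Prop} {a : V} {l : List V}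
    (hP : ∀ x ∈ a :: l, ∀ y ∈ a :: l, P x → P y → x = y)
    (hQ : ∀ x ∈ a :: l, ∀ y ∈ a :: l, Q x → Q y → x = y)
    (hc : Cyc R a l) (hnd : (a :: l).Nodup) (hlen : 2 ≤ l.length) :
    ∃ b m, Cyc R b m ∧ (b :: m).Perm (a :: l) ∧ ¬ P (tip b m) ∧ ¬ Q b := by
  match l, hlen with
  | b :: c :: u, _ =>
  set z := tip a (b :: c :: u) with hzdef
  have hzmem : z ∈ c :: u := by
    have := tip_mem c u
    simpa [hzdef] using this
  have hzl : z ∈ a :: b :: c :: u := by simp [List.mem_cons]; right; right; simpa using hzmem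
  have hal : (a : V) ∈ a :: b :: c :: u := by simp
  have hbl : (b : V) ∈ a :: b :: c :: u := by simp
  have hcl : (c : V) ∈ a :: b :: c :: u := by simp
  -- distinctness facts
  have hnd1 : a ∉ b :: c :: u := by simp at hnd ⊢; tauto
  have hnd2 : b ∉ c :: u := by simp at hnd ⊢; tauto
  have hbc : b ≠ c := by simp at hnd; tauto
  have hza : z ≠ a := fun e => hnd1 (e ▸ (List.mem_cons_of_mem b hzmem))
  have hzb : z ≠ b := fun e => hnd2 (e ▸ hzmem)
  have hab : a ≠ b := by simp at hnd; tauto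
  have hac : a ≠ c := by simp at hnd; tauto
  -- the three rotations
  have hr1 : Cyc R b ((c :: u) ++ [a]) := rot_step hc
  have hr1' : Cyc R b (c :: (u ++ [a])) := by simpa using hr1
  have hr2 : Cyc R c ((u ++ [a]) ++ [b]) := rot_step hr1'
  have hperm1 : (b :: ((c :: u) ++ [a])).Perm (a :: b :: c :: u) := by
    have : (b :: ((c :: u) ++ [a])) = (b :: c :: u) ++ [a] := by simp
    rw [this]
    exact List.perm_append_singleton _ _
  have hperm2 : (c :: ((u ++ [a]) ++ [b])).Perm (a :: b :: c :: u) := by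
    have h1 : (c :: ((u ++ [a]) ++ [b])) = (c :: (u ++ [a])) ++ [b] := by simp
    rw [h1]
    refine (List.perm_append_singleton _ _).trans ?_
    have h2 : (b :: c :: (u ++ [a])) = (b :: c :: u) ++ [a] := by simp
    rw [h2]
    exact List.perm_append_singleton _ _
  by_cases c0 : ¬ P z ∧ ¬ Q a
  · exact ⟨a, b :: c :: u, hc, List.Perm.refl _, c0.1, c0.2⟩
  by_cases c1 : ¬ P a ∧ ¬ Q b
  · exact ⟨b, (c :: u) ++ [a], hr1, hperm1, by rw [tip_snoc]; exact c1.1, c1.2⟩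
  by_cases c2 : ¬ P b ∧ ¬ Q c
  · exact ⟨c, (u ++ [a]) ++ [b], hr2, hperm2, by rw [tip_snoc]; exact c2.1, c2.2⟩
  · exfalso
    simp only [not_and_or, not_not] at c0 c1 c2
    rcases c0 with h0 | h0 <;> rcases c1 with h1 | h1 <;> rcases c2 with h2 | h2
    · exact hza (hP z hzl a hal h0 h1)
    · exact hza (hP z hzl a hal h0 h1)
    · exact hzb (hP z hzl b hbl h0 h2)
    · exact hbc (hQ b hbl c hcl h1 h2)
    · exact hab (hP a hal b hbl h1 h2)
    · exact hac (hQ a hal c hcl h0 h2)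
    · exact hab (hQ a hal b hbl h0 h1)
    · exact hab (hQ a hal b hbl h0 h1)

end rel3

end MonoC3
namespace MonoC3

variable {V : Type*} {A : V → V → Prop}

lemma ins_aux (hD : IsMonoC3FreeTournament A) : ∀ (l : List V) (a v : V),
    v ∉ a :: l → List.Chain A a l → (A a v ∨ (¬ A a v ∧ ¬ A v a)) →
    (∃ x ∈ l, A v x) →
    ∃ m, List.Chain A a m ∧ (a :: m).Perm (v :: a :: l) ∧ tip a m = tip a l := by
  intro l
  induction l with
  | nil =>
    rintro a v _ _ _ ⟨x, hx, _⟩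
    simp at hx
  | cons b t ih =>
    intro a v hv hchain hav hex
    rw [chain_cons_iff] at hchain
    have hvb : v ≠ b := fun e => hv (by simp [e])
    have hva : v ≠ a := fun e => hv (by simp [e])
    have hrec : (A b v ∨ (¬ A b v ∧ ¬ A v b)) → (∃ x ∈ b :: t, A v x ∧ x ≠ b) →
        ∃ m, List.Chain A a m ∧ (a :: m).Perm (v :: a :: b :: t) ∧ tip a m = tip a (b :: t) := by
      intro hprem hex'
      have hex'' : ∃ x ∈ t, A v x := by
        obtain ⟨x, hx, hax, hxb⟩ := hex'
        rcases List.mem_cons.1 hx with rfl | hx'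
        · exact absurd rfl hxb
        · exact ⟨x, hx', hax⟩
      obtain ⟨m', hm', hperm', htip'⟩ :=
        ih b v (fun h => hv (List.mem_cons_of_mem a h)) hchain.2 hprem hex''
      refine ⟨b :: m', List.chain_cons.2 ⟨hchain.1, hm'⟩, ?_, by simp [htip']⟩
      have h1 : (a :: b :: m').Perm (a :: v :: b :: t) := hperm'.cons a
      have h2 : (a :: v :: b :: t).Perm (v :: a :: b :: t) := List.Perm.swap v a _
      exact h1.trans h2
    rcases hav with hav | ⟨h1, h2⟩
    · by_cases hvb2 : A v b
      · refine ⟨v :: b :: t, ?_, ?_, by simp⟩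
        · exact List.chain_cons.2 ⟨hav, List.chain_cons.2 ⟨hvb2, hchain.2⟩⟩
        · exact List.Perm.swap v a _
      · refine hrec ?_ ?_
        · by_cases h : A b v
          · exact Or.inl h
          · exact Or.inr ⟨h, hvb2⟩
        · obtain ⟨x, hx, hax⟩ := hex
          exact ⟨x, hx, hax, fun e => hvb2 (e ▸ hax)⟩
    · have hbv : A b v := hflip hD h2 h1 hva hchain.1
      refine hrec (Or.inl hbv) ?_
      obtain ⟨x, hx, hax⟩ := hex
      exact ⟨x, hx, hax, fun e => (hasym hD hbv) (e ▸ hax)⟩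

section walk
variable {S : Set V}

/-- the arc relation restricted to `S` -/
def AS (A : V → V → Prop) (S : Set V) : V → V → Prop := fun x y => A x y ∧ x ∈ S ∧ y ∈ S

lemma chain_AS_mem {a : V} {l : List V} (h : List.Chain (AS A S) a l) : ∀ w ∈ l, w ∈ S := by
  induction l generalizing a with
  | nil => simp
  | cons b t ihh =>
    rw [chain_cons_iff] at h
    intro w hw
    rcases List.mem_cons.1 hw with rfl | hw'
    · exact h.1.2.2
    · exact ihh h.2 w hw'

lemma cyc_AS_mem {a : V} {l : List V} (h : Cyc (AS A S) a l) : ∀ w ∈ a :: l, w ∈ S := by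
  intro w hw
  rcases List.mem_cons.1 hw with rfl | hw'
  · exact h.2.2.2
  · exact chain_AS_mem h.1 w hw'

lemma grow (hD : IsMonoC3FreeTournament A)
    (hst : ∀ x ∈ S, ∀ y ∈ S, Relation.ReflTransGen (AS A S) x y)
    {a : V} {l : List V} (hc : Cyc A a l) (hnd : (a :: l).Nodup)
    (hmem : ∀ x ∈ a :: l, x ∈ S) {v : V} (hvS : v ∈ S) (hvl : v ∉ a :: l) :
    ∃ b m, Cyc A b m ∧ (b :: m).Nodup ∧ (∀ x ∈ b :: m, x ∈ S) ∧
      (a :: l).length < (b :: m).length := by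
  classical
  by_cases hA : ∃ w ∈ S, w ∉ a :: l ∧ (∃ x ∈ a :: l, A x w) ∧ (∃ y ∈ a :: l, A w y)
  · -- insertion case
    obtain ⟨w, hwS, hwl, ⟨x0, hx0, hx0w⟩, ⟨y0, hy0, hwy0⟩⟩ := hA
    obtain ⟨m, hmcyc, hperm⟩ := rot_to hx0 hc
    have hwm : w ∉ x0 :: m := fun h => hwl (hperm.mem_iff.1 h)
    have hy0m : y0 ∈ x0 :: m := hperm.mem_iff.2 hy0
    have hy0x0 : y0 ≠ x0 := by
      intro e
      exact hasym hD hx0w (e ▸ hwy0)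
    have hy0m' : y0 ∈ m := by
      rcases List.mem_cons.1 hy0m with e | h
      · exact absurd e hy0x0
      · exact h
    obtain ⟨m', hm', hperm', htip'⟩ := ins_aux hD m x0 w hwm hmcyc.1 (Or.inl hx0w)
      ⟨y0, hy0m', hwy0⟩
    refine ⟨x0, m', ⟨hm', htip' ▸ hmcyc.2⟩, ?_, ?_, ?_⟩
    · rw [hperm'.nodup_iff]
      exact List.nodup_cons.2 ⟨hwm, hperm.nodup_iff.2 hnd⟩
    · intro x hx
      rcases List.mem_cons.1 (hperm'.mem_iff.1 hx) with rfl | h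
      · exact hwS
      · exact hmem x (hperm.mem_iff.1 h)
    · have e1 : (x0 :: m').length = (w :: x0 :: m).length := hperm'.length_eq
      have e2 : (x0 :: m).length = (a :: l).length := hperm.length_eq
      simp only [List.length_cons] at e1 e2 ⊢
      omega
  · -- two-vertex enlargement case
    push_neg at hA
    have hdich : ∀ w ∈ S, w ∉ a :: l →
        (∀ x ∈ a :: l, ¬ A x w) ∨ (∀ x ∈ a :: l, ¬ A w x) := by
      intro w hwS hwl
      by_cases hin : ∃ x ∈ a :: l, A x w
      · right
        have := hA w hwS hwl hin
        exact this
      · left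
        push_neg at hin
        exact hin
    -- find a vertex outside the cycle dominated by nothing on the cycle
    have haS : a ∈ S := hmem a (by simp)
    obtain ⟨w1, hch1, hl1⟩ := List.exists_isChain_cons_of_relationReflTransGen (hst v hvS a haS)
    have htip1 : tip v w1 = a := hl1
    obtain ⟨s0, y0, hs0y0, hs0, hy0⟩ :=
      cross (P := fun x => x ∈ a :: l) w1 v hch1 hvl (htip1 ▸ (by simp : a ∈ a :: l))
    have hs0S : s0 ∈ S := hs0y0.2.1
    have hd0dom : ∀ x ∈ a :: l, ¬ A x s0 := by
      rcases hdich s0 hs0S hs0 with h | h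
      · exact h
      · exact absurd hs0y0.1 (h y0 hy0)
    -- find a crossing arc from a "sub" vertex to a "dom" vertex
    obtain ⟨w2, hch2, hl2⟩ := List.exists_isChain_cons_of_relationReflTransGen (hst a haS s0 hs0S)
    have htip2 : tip a w2 = s0 := hl2
    obtain ⟨u, d, hud, hu, hd⟩ :=
      cross (P := fun x => x ∈ S ∧ x ∉ a :: l ∧ ∀ y ∈ a :: l, ¬ A y x) w2 a hch2
        (by intro h; exact h.2.1 (by simp))
        (htip2 ▸ ⟨hs0S, hs0, hd0dom⟩)
    have huS : u ∈ S := hud.2.1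
    have hul : u ∉ a :: l := by
      intro h
      exact hd.2.2 u h hud.1
    have husub : ∀ x ∈ a :: l, ¬ A u x := by
      rcases hdich u huS hul with h | h
      · exact absurd ⟨huS, hul, h⟩ hu
      · exact h
    obtain ⟨hdS, hdl, hddom⟩ := hd
    have hsd : A u d := hud.1
    have hsdne : u ≠ d := fun e => hD.1 u (e ▸ hsd)
    -- rotate so the wrap pair is adjacent to u (as in-nb) and d (as out-nb)
    have hlen2 : 2 ≤ l.length := cyc_len hD hc hnd
    obtain ⟨b, m, hbm, hperm, hPt, hQb⟩ :=
      rot_good (P := fun x => ¬ A x u) (Q := fun x => ¬ A d x)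
        (fun x hx y hy hpx hpy => by
          have hxu : x ≠ u := fun e => hul (e ▸ hx)
          have hyu : y ≠ u := fun e => hul (e ▸ hy)
          exact uniqNon hD (Ne.symm hxu) (Ne.symm hyu) (husub x hx) hpx (husub y hy) hpy)
        (fun x hx y hy hqx hqy => by
          have hxd : x ≠ d := fun e => hdl (e ▸ hx)
          have hyd : y ≠ d := fun e => hdl (e ▸ hy)
          exact uniqNon hD (Ne.symm hxd) (Ne.symm hyd) hqx (hddom x hx) hqy (hddom y hy))
        hc hnd hlen2
    rw [not_not] at hPt hQb
    refine ⟨b, m ++ [u, d], ⟨?_, ?_⟩, ?_, ?_, ?_⟩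
    · have e1 : m ++ [u, d] = (m ++ [u]) ++ [d] := by simp
      rw [e1, chain_snoc, chain_snoc]
      exact ⟨⟨hbm.1, hPt⟩, by rw [tip_snoc]; exact hsd⟩
    · have e1 : m ++ [u, d] = (m ++ [u]) ++ [d] := by simp
      rw [e1, tip_snoc]
      exact hQb
    · have e1 : b :: (m ++ [u, d]) = (b :: m) ++ [u, d] := by simp
      rw [e1, List.nodup_append]
      refine ⟨hperm.nodup_iff.2 hnd, by simp [hsdne], ?_⟩
      intro x hx y hy hxy
      subst hxy
      revert hy
      simp only [List.mem_cons, List.not_mem_nil, or_false, List.mem_singleton]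
      rintro (rfl | rfl)
      · exact hul (hperm.mem_iff.1 hx)
      · exact hdl (hperm.mem_iff.1 hx)
    · intro x hx
      rcases List.mem_cons.1 hx with rfl | hx'
      · exact hmem x (hperm.mem_iff.1 (by simp))
      · rcases List.mem_append.1 hx' with h | h
        · exact hmem x (hperm.mem_iff.1 (List.mem_cons_of_mem b h))
        · rcases List.mem_cons.1 h with rfl | h'
          · exact huS
          · rcases List.mem_cons.1 h' with rfl | h''
            · exact hdS
            · simp at h''
    · have e2 : (b :: m).length = (a :: l).length := hperm.length_eq
      simp only [List.length_cons, List.length_append] at e2 ⊢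
      omega

lemma CYC [Fintype V] (hD : IsMonoC3FreeTournament A)
    (hst : ∀ x ∈ S, ∀ y ∈ S, Relation.ReflTransGen (AS A S) x y)
    {x y : V} (hx : x ∈ S) (hy : y ∈ S) (hxy : x ≠ y) :
    ∃ a l, Cyc A a l ∧ (a :: l).Nodup ∧ (∀ w, w ∈ a :: l ↔ w ∈ S) := by
  classical
  -- build an initial closed walk
  obtain ⟨l1, hc1, hl1⟩ := List.exists_isChain_cons_of_relationReflTransGen (hst x hx y hy)
  obtain ⟨l2, hc2, hl2⟩ := List.exists_isChain_cons_of_relationReflTransGen (hst y hy x hx)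
  have htip1 : tip x l1 = y := hl1
  have htip2 : tip y l2 = x := hl2
  have hl2ne : l2 ≠ [] := by
    intro e
    subst e
    simp only [tip_nil] at htip2
    exact hxy htip2.symm
  obtain ⟨l2', z, hconc⟩ := (List.eq_nil_or_concat l2).resolve_left hl2ne
  rw [List.concat_eq_append] at hconc
  subst hconc
  have hz : z = x := by simpa using htip2
  change List.Chain (AS A S) y (l2' ++ [z]) at hc2
  rw [chain_snoc] at hc2
  have hwalk : Cyc (AS A S) x (l1 ++ l2') := by
    constructor
    · exact chain_append' hc1 (htip1 ▸ hc2.1)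
    · rw [tip_append, htip1]
      exact hz ▸ hc2.2
  obtain ⟨b0, m0, hb0, hnd0, _⟩ :=
    extract (x :: (l1 ++ l2')).length x (l1 ++ l2') le_rfl hwalk
  have hb0A : Cyc A b0 m0 := ⟨List.Chain.imp (fun _ _ h => h.1) hb0.1, hb0.2.1⟩
  have hb0S : ∀ w ∈ b0 :: m0, w ∈ S := cyc_AS_mem hb0
  -- growth loop
  have loop : ∀ n (a : V) (l : List V), Cyc A a l → (a :: l).Nodup →
      (∀ w ∈ a :: l, w ∈ S) → Fintype.card V - (a :: l).length ≤ n →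
      ∃ a' l', Cyc A a' l' ∧ (a' :: l').Nodup ∧ (∀ w, w ∈ a' :: l' ↔ w ∈ S) := by
    intro n
    induction n with
    | zero =>
      intro a l hc hnd hmem hn
      by_cases hall : ∀ w ∈ S, w ∈ a :: l
      · exact ⟨a, l, hc, hnd, fun w => ⟨fun h => hmem w h, fun h => hall w h⟩⟩
      · push_neg at hall
        obtain ⟨v, hvS, hvl⟩ := hall
        obtain ⟨b, m, _, hnd', _, hlt⟩ := grow hD hst hc hnd hmem hvS hvl
        have := hnd'.length_le_card
        omega
    | succ n ihn =>
      intro a l hc hnd hmem hn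
      by_cases hall : ∀ w ∈ S, w ∈ a :: l
      · exact ⟨a, l, hc, hnd, fun w => ⟨fun h => hmem w h, fun h => hall w h⟩⟩
      · push_neg at hall
        obtain ⟨v, hvS, hvl⟩ := hall
        obtain ⟨b, m, hc', hnd', hmem', hlt⟩ := grow hD hst hc hnd hmem hvS hvl
        exact ihn b m hc' hnd' hmem' (by omega)
  exact loop (Fintype.card V) b0 m0 hb0A hnd0 hb0S (by omega)

end walk

end MonoC3

open MonoC3

/-- Let `D` be a mono-`C3`-free tournament with `|V(D)| ≥ 3` whose
strongly connected components are `C 0, C 1, …, C p` (`p ≥ 0`), indexed so that for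
`i < j` no arc goes from `C i` to `C j`.  If every vertex has at least one out-neighbor,
then `D` contains a directed Hamilton path. -/
theorem directed_hamilton_path_of_min_outdegree_one {V : Type*} [Fintype V]
    (A : V → V → Prop) (hD : IsMonoC3FreeTournament A)
    (hcard : 3 ≤ Fintype.card V)
    (p : ℕ) (C : ℕ → Set V)
    (hcover : ∀ v : V, ∃ i ≤ p, v ∈ C i)
    (hne : ∀ i ≤ p, (C i).Nonempty)
    (hconn : ∀ i ≤ p, ∀ u ∈ C i, ∀ v ∈ C i, Relation.ReflTransGen A u v)
    (hmax : ∀ i ≤ p, ∀ u ∈ C i, ∀ v : V,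
      Relation.ReflTransGen A u v → Relation.ReflTransGen A v u → v ∈ C i)
    (hdisj : ∀ i j, i ≤ p → j ≤ p → i ≠ j → Disjoint (C i) (C j))
    (horder : ∀ i j, i < j → j ≤ p → ∀ u ∈ C i, ∀ v ∈ C j, ¬A u v)
    (hout : ∀ v : V, ∃ u, A v u) :
    ∃ f : ℕ → V, Set.InjOn f (Set.Iio (Fintype.card V)) ∧
      (∀ x : V, ∃ j < Fintype.card V, f j = x) ∧
      ∀ j : ℕ, j + 1 < Fintype.card V → A (f j) (f (j + 1)) := by

  classical
  choose idx hle hmemC using hcover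
  have huniq : ∀ v i, i ≤ p → v ∈ C i → idx v = i := by
    intro v i hi hv
    by_contra hne'
    exact (Set.disjoint_left.1 (hdisj _ _ (hle v) hi hne')) (hmemC v) hv
  have hmono : ∀ u v, A u v → idx v ≤ idx u := by
    intro u v h
    by_contra hlt
    push_neg at hlt
    exact horder (idx u) (idx v) hlt (hle v) u (hmemC u) v (hmemC v) h
  have hrtg : ∀ u v, Relation.ReflTransGen A u v → idx v ≤ idx u := by
    intro u v h
    induction h with
    | refl => exact le_rfl
    | tail _ hbc ih => exact le_trans (hmono _ _ hbc) ih
  have hwithin : ∀ i, i ≤ p → ∀ u ∈ C i, ∀ v ∈ C i,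
      Relation.ReflTransGen (AS A (C i)) u v := by
    intro i hi u hu
    suffices haux : ∀ w, Relation.ReflTransGen A u w → w ∈ C i →
        Relation.ReflTransGen (AS A (C i)) u w by
      intro v hv
      exact haux v (hconn i hi u hu v hv) hv
    intro w hw
    induction hw with
    | refl => intro _; exact Relation.ReflTransGen.refl
    | @tail b c hub hbc ih =>
      intro hc
      have hbi : b ∈ C i := by
        have h1 : idx b ≤ idx u := hrtg _ _ hub
        have h2 : idx c ≤ idx b := hmono _ _ hbc
        have h3 : idx u = i := huniq u i hi hu
        have h4 : idx c = i := huniq c i hi hc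
        have h5 : idx b = i := by omega
        exact h5 ▸ hmemC b
      exact (ih hbi).tail ⟨hbc, hbi, hc⟩
  -- at most one vertex of `C (j+1)` has no out-neighbour in `C j`
  have BSP : ∀ j, j + 1 ≤ p → ∀ x ∈ C (j+1), ∀ y ∈ C (j+1),
      ¬ (∃ h ∈ C j, A x h) → ¬ (∃ h ∈ C j, A y h) → x = y := by
    intro j hj x hx y hy hnx hny
    push_neg at hnx hny
    obtain ⟨v0, hv0⟩ := hne j (by omega)
    have hv0x : ¬ A v0 x := horder j (j+1) (by omega) hj v0 hv0 x hx
    have hv0y : ¬ A v0 y := horder j (j+1) (by omega) hj v0 hv0 y hy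
    have hxv0 : x ≠ v0 := by
      intro e
      exact (Set.disjoint_left.1 (hdisj (j+1) j hj (by omega) (by omega))) hx (e ▸ hv0)
    have hyv0 : y ≠ v0 := by
      intro e
      exact (Set.disjoint_left.1 (hdisj (j+1) j hj (by omega) (by omega))) hy (e ▸ hv0)
    exact uniqNon hD (Ne.symm hxv0) (Ne.symm hyv0) hv0x (hnx v0 hv0) hv0y (hny v0 hv0)
  -- at most one vertex of `C j` is not dominated by a fixed vertex of a later component
  have ASUB : ∀ j, j ≤ p → ∀ e : V, j < idx e → ∀ x ∈ C j, ∀ y ∈ C j,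
      ¬ A e x → ¬ A e y → x = y := by
    intro j hj e hlt x hx y hy hex hey
    have hxe : ¬ A x e := horder j (idx e) hlt (hle e) x hx e (hmemC e)
    have hye : ¬ A y e := horder j (idx e) hlt (hle e) y hy e (hmemC e)
    have hexne : e ≠ x := by
      intro h
      have := huniq x j hj hx
      rw [← h] at this
      omega
    have heyne : e ≠ y := by
      intro h
      have := huniq y j hj hy
      rw [← h] at this
      omega
    exact uniqNon hD hexne heyne hex hxe hey hye
  -- a singleton component `C (j+1) = {u}` forces an arc from `u` into `C j`
  have SP : ∀ j, j + 1 ≤ p → ∀ u ∈ C (j+1), (∀ w ∈ C (j+1), w = u) →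
      ∃ h ∈ C j, A u h := by
    intro j hj u hu hone
    by_contra hno
    push_neg at hno
    obtain ⟨w, hw⟩ := hout u
    have hidxu : idx u = j + 1 := huniq u (j+1) hj hu
    have h1 : idx w ≤ j + 1 := hidxu ▸ hmono u w hw
    have hwu : w ≠ u := fun e => hD.1 u (e ▸ hw)
    have h2 : idx w ≠ j + 1 := by
      intro e
      exact hwu (hone w (e ▸ hmemC w))
    have h3 : idx w ≠ j := by
      intro e
      exact hno w (e ▸ hmemC w) hw
    obtain ⟨v0, hv0⟩ := hne j (by omega)
    have hna1 : ¬ A u v0 := hno v0 hv0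
    have hna2 : ¬ A v0 u := horder j (j+1) (by omega) hj v0 hv0 u hu
    have huv0 : u ≠ v0 := by
      intro e
      have := huniq v0 j (by omega) hv0
      rw [← e] at this
      omega
    have hwv0 : ¬ A w v0 :=
      horder (idx w) j (by omega) (by omega) w (hmemC w) v0 hv0
    have hv0w : v0 ≠ w := by
      intro e
      have := huniq v0 j (by omega) hv0
      rw [e] at this
      omega
    by_cases hvw : A v0 w
    · exact hD.2.2.2 u v0 huv0 hna1 hna2 w ⟨hw, hvw⟩
    · exact hwu (uniqNon hD (Ne.symm huv0) hv0w hna2 hna1 hvw hwv0).symm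
  -- the main stitching induction over components
  have BLOCK : ∀ j, j ≤ p → ∀ Q : V → Prop,
      (∀ x ∈ C j, ∀ y ∈ C j, ¬ Q x → ¬ Q y → x = y) → (∃ h ∈ C j, Q h) →
      ∃ a l, List.Chain A a l ∧ (a :: l).Nodup ∧
        (∀ x, x ∈ a :: l ↔ ∃ i ≤ j, x ∈ C i) ∧ Q a := by
    intro j
    induction j with
    | zero =>
      intro hj Q hsub hex
      by_cases h2 : ∃ u ∈ C 0, ∃ v ∈ C 0, u ≠ v
      · obtain ⟨u, hu, v, hv, huv⟩ := h2
        obtain ⟨a, l, hc, hnd, hiff⟩ := CYC hD (hwithin 0 hj) hu hv huv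
        have hlen2 : 2 ≤ l.length := cyc_len hD hc hnd
        obtain ⟨b, m, hbm, hperm, _, hQb⟩ :=
          rot_good (P := fun _ => False) (Q := fun x => ¬ Q x)
            (fun x _ y _ hpx _ => hpx.elim)
            (fun x hx y hy => hsub x ((hiff x).1 hx) y ((hiff y).1 hy))
            hc hnd hlen2
        rw [not_not] at hQb
        refine ⟨b, m, hbm.1, hperm.nodup_iff.2 hnd, ?_, hQb⟩
        intro w
        constructor
        · intro hw
          exact ⟨0, le_rfl, (hiff w).1 (hperm.subset hw)⟩
        · rintro ⟨i, hi, hw⟩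
          have hi0 : i = 0 := Nat.le_zero.mp hi
          exact hperm.mem_iff.2 ((hiff w).2 (hi0 ▸ hw))
      · exfalso
        push_neg at h2
        obtain ⟨u0, hu0⟩ := hne 0 hj
        obtain ⟨w, hw⟩ := hout u0
        have h0 : idx u0 = 0 := huniq _ _ hj hu0
        have h1 : idx w ≤ idx u0 := hmono _ _ hw
        have h5 : idx w = 0 := by omega
        have hwC : w ∈ C 0 := h5 ▸ hmemC w
        have he : w = u0 := h2 w hwC u0 hu0
        exact hD.1 u0 (he ▸ hw)
    | succ j ihj =>
      intro hj Q hsub hex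
      have hjp : j ≤ p := by omega
      by_cases h2 : ∃ u ∈ C (j+1), ∃ v ∈ C (j+1), u ≠ v
      · obtain ⟨u, hu, v, hv, huv⟩ := h2
        obtain ⟨a, l, hc, hnd, hiff⟩ := CYC hD (hwithin (j+1) hj) hu hv huv
        have hlen2 : 2 ≤ l.length := cyc_len hD hc hnd
        obtain ⟨b, m, hbm, hperm, hPt, hQb⟩ :=
          rot_good (P := fun x => ¬ ∃ h ∈ C j, A x h) (Q := fun x => ¬ Q x)
            (fun x hx y hy hpx hpy =>
              BSP j hj x ((hiff x).1 hx) y ((hiff y).1 hy) hpx hpy)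
            (fun x hx y hy => hsub x ((hiff x).1 hx) y ((hiff y).1 hy))
            hc hnd hlen2
        rw [not_not] at hPt hQb
        have htipmem : tip b m ∈ C (j+1) := (hiff _).1 (hperm.subset (tip_mem b m))
        have htipidx : j < idx (tip b m) := by
          rw [huniq _ _ hj htipmem]
          omega
        obtain ⟨a', l', hch', hnd', hiff', hQ'⟩ :=
          ihj hjp (fun x => A (tip b m) x) (ASUB j hjp (tip b m) htipidx) hPt
        refine ⟨b, m ++ a' :: l', ?_, ?_, ?_, hQb⟩
        · rw [chain_middle]
          exact ⟨hbm.1, hQ', hch'⟩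
        · have e1 : b :: (m ++ a' :: l') = (b :: m) ++ (a' :: l') := by simp
          rw [e1, List.nodup_append]
          refine ⟨hperm.nodup_iff.2 hnd, hnd', ?_⟩
          intro x hx x' hx' hxx'
          subst hxx'
          have hxC : x ∈ C (j+1) := (hiff x).1 (hperm.subset hx)
          obtain ⟨i, hi, hxi⟩ := (hiff' x).1 hx'
          have e2 := huniq x _ hj hxC
          have e3 := huniq x i (by omega) hxi
          omega
        · intro w
          constructor
          · intro hw
            rcases List.mem_cons.1 hw with rfl | hw'
            · exact ⟨j+1, le_rfl, (hiff w).1 (hperm.subset (by simp))⟩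
            · rcases List.mem_append.1 hw' with h | h
              · exact ⟨j+1, le_rfl, (hiff w).1 (hperm.subset (List.mem_cons_of_mem b h))⟩
              · obtain ⟨i, hi, hwi⟩ := (hiff' w).1 h
                exact ⟨i, by omega, hwi⟩
          · rintro ⟨i, hi, hwi⟩
            by_cases hij : i = j + 1
            · subst hij
              have hmem1 : w ∈ a :: l := (hiff w).2 hwi
              have hmem2 := hperm.mem_iff.2 hmem1
              rcases List.mem_cons.1 hmem2 with rfl | h
              · simp
              · exact List.mem_cons_of_mem b (List.mem_append.2 (Or.inl h))
            · have hmem3 : w ∈ a' :: l' := (hiff' w).2 ⟨i, by omega, hwi⟩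
              exact List.mem_cons_of_mem b (List.mem_append.2 (Or.inr hmem3))
      · push_neg at h2
        obtain ⟨u, hu⟩ := hne (j+1) hj
        have hone : ∀ w ∈ C (j+1), w = u := fun w hw => h2 w hw u hu
        have hQu : Q u := by
          obtain ⟨h0, hh0, hQ0⟩ := hex
          exact (hone h0 hh0) ▸ hQ0
        have hprem : ∃ h ∈ C j, A u h := SP j hj u hu hone
        have huidx : j < idx u := by
          rw [huniq u _ hj hu]
          omega
        obtain ⟨a', l', hch', hnd', hiff', hQ'⟩ :=
          ihj hjp (fun x => A u x) (ASUB j hjp u huidx) hprem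
        refine ⟨u, a' :: l', List.chain_cons.2 ⟨hQ', hch'⟩, ?_, ?_, hQu⟩
        · rw [List.nodup_cons]
          refine ⟨?_, hnd'⟩
          intro hu'
          obtain ⟨i, hi, hui⟩ := (hiff' u).1 hu'
          have e2 := huniq u _ hj hu
          have e3 := huniq u i (by omega) hui
          omega
        · intro w
          constructor
          · intro hw
            rcases List.mem_cons.1 hw with rfl | hw'
            · exact ⟨j+1, le_rfl, hu⟩
            · obtain ⟨i, hi, hwi⟩ := (hiff' w).1 hw'
              exact ⟨i, by omega, hwi⟩
          · rintro ⟨i, hi, hwi⟩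
            by_cases hij : i = j+1
            · subst hij
              exact (hone w hwi) ▸ (by simp)
            · exact List.mem_cons_of_mem u ((hiff' w).2 ⟨i, by omega, hwi⟩)
  -- assemble the final Hamilton path
  obtain ⟨a, l, hch, hnd, hiff, _⟩ :=
    BLOCK p le_rfl (fun _ => True) (fun x _ y _ hq _ => absurd trivial hq)
      ⟨(hne p le_rfl).choose, (hne p le_rfl).choose_spec, trivial⟩
  have hfull : ∀ x : V, x ∈ a :: l := fun x => (hiff x).2 ⟨idx x, hle x, hmemC x⟩
  have hlenL : (a :: l).length = Fintype.card V := by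
    have h1 : (a :: l).toFinset = Finset.univ :=
      Finset.eq_univ_iff_forall.2 (fun x => List.mem_toFinset.2 (hfull x))
    have h2 := List.toFinset_card_of_nodup hnd
    rw [h1] at h2
    simpa [Finset.card_univ] using h2.symm
  refine ⟨fun n => (a :: l).getD n a, ?_, ?_, ?_⟩
  · intro i hi j' hj' hij
    simp only [Set.mem_Iio] at hi hj'
    dsimp only at hij
    rw [← hlenL] at hi hj'
    rw [List.getD_eq_getElem (a :: l) a hi, List.getD_eq_getElem (a :: l) a hj'] at hij
    exact (hnd.getElem_inj_iff).1 hij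
  · intro x
    obtain ⟨n, hn, he⟩ := List.mem_iff_getElem.1 (hfull x)
    refine ⟨n, ?_, ?_⟩
    · rw [← hlenL]; exact hn
    · show (a :: l).getD n a = x
      rw [List.getD_eq_getElem (a :: l) a hn]; exact he
  · intro n hn
    show A ((a :: l).getD n a) ((a :: l).getD (n+1) a)
    rw [← hlenL] at hn
    have hc' : List.Chain' A (a :: l) := hch
    have harc := List.isChain_iff_getElem.1 hc' n (by simp only [List.length_cons] at hn ⊢; omega)
    rw [List.getD_eq_getElem (a :: l) a (by omega), List.getD_eq_getElem (a :: l) a hn]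
    simpa [List.get_eq_getElem] using harc
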